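/- arXiv:2304.04480 — 2 statements merged into one kernel-verified Lean document; each statement's English description precedes it below -/
import Mathlib

section
/- Let H be a simple graph on k vertices and let n be a positive integer with C(n,k)·k! < 2^{C(k,2)}, where C(a,b) denotes the binomial coefficient. Then there exists a labelled graph on n vertices that contains no induced copy of H. -/
open Classical in
/-- Let `H` be a simple graph on `k` vertices and let `n` be a positive integer with
`C(n,k) · k! < 2^(C(k,2))`.  Then there exists a labelled graph on `n` vertices
(a simple graph on `Fin n`) containing no induced copy of `H`, i.e. admitting no graph
embedding of `H`. -/
theorem exists_graph_without_induced_copy_of_count {V : Type*} [Fintype V]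
    (H : SimpleGraph V) (k n : ℕ) (hk : Fintype.card V = k) (hn : 0 < n)
    (hlt : n.choose k * k.factorial < 2 ^ k.choose 2) :
    ∃ G : SimpleGraph (Fin n), IsEmpty (H ↪g G) := by
  by_contra hcon
  push_neg at hcon
  have e : ∀ G : SimpleGraph (Fin n), H ↪g G := fun G => (hcon G).some
  have hkn : k ≤ n := by
    have := Fintype.card_le_of_injective _ (e ⊥).toEmbedding.injective
    simpa [hk] using this
  -- the graph determined by an edge-indicator function
  set θ : ({s : Sym2 (Fin n) // ¬ s.IsDiag} → Prop) → SimpleGraph (Fin n) :=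
    fun h => SimpleGraph.fromEdgeSet {s | ∃ hs : ¬ s.IsDiag, h ⟨s, hs⟩} with hθ
  -- the encoding surjection
  set Ψ : (Σ f : V ↪ Fin n, ({p : {s : Sym2 (Fin n) // ¬ s.IsDiag} //
        ¬ ∀ x ∈ p.1, x ∈ Set.range f} → Prop)) → ({s : Sym2 (Fin n) // ¬ s.IsDiag} → Prop) :=
    fun fg p => if hp : ∀ x ∈ p.1, x ∈ Set.range fg.1
      then (∃ u v : V, p.1 = s(fg.1 u, fg.1 v) ∧ H.Adj u v)
      else fg.2 ⟨p, hp⟩ with hΨ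
  have hsurj : Function.Surjective Ψ := by
    intro h
    refine ⟨⟨(e (θ h)).toEmbedding, fun p => h p.1⟩, ?_⟩
    funext p
    obtain ⟨s, hs⟩ := p
    induction s using Sym2.ind with
    | _ a b =>
      have hab : a ≠ b := fun hab => hs (by simp [hab])
      by_cases hp : ∀ x ∈ (⟨s(a, b), hs⟩ : {s : Sym2 (Fin n) // ¬ s.IsDiag}).1,
          x ∈ Set.range ((e (θ h)).toEmbedding : V → Fin n)
      · simp only [hΨ, dif_pos hp]
        apply propext
        constructor
        · rintro ⟨u, v, huv, hadj⟩
          have hadj' : (θ h).Adj ((e (θ h)).toEmbedding u) ((e (θ h)).toEmbedding v) :=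
            ((e (θ h)).map_adj_iff).mpr hadj
          have hG : (θ h).Adj a b := by
            have hmem : s((e (θ h)).toEmbedding u, (e (θ h)).toEmbedding v) ∈ (θ h).edgeSet :=
              (SimpleGraph.mem_edgeSet _).mpr hadj'
            rw [← huv] at hmem
            exact (SimpleGraph.mem_edgeSet _).mp hmem
          rw [hθ] at hG
          obtain ⟨⟨hs', hh⟩, -⟩ := (SimpleGraph.fromEdgeSet_adj _).mp hG
          exact hh
        · intro hh
          have ha := hp a (by simp)
          have hb := hp b (by simp)
          obtain ⟨u, hu⟩ := ha
          obtain ⟨v, hv⟩ := hb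
          have hG : (θ h).Adj a b := by
            rw [hθ]
            exact (SimpleGraph.fromEdgeSet_adj _).mpr ⟨⟨hs, hh⟩, hab⟩
          have hG' : (θ h).Adj ((e (θ h)).toEmbedding u) ((e (θ h)).toEmbedding v) := by
            rw [hu, hv]; exact hG
          exact ⟨u, v, by rw [hu, hv], (e (θ h)).map_adj_iff.mp hG'⟩
      · simp only [hΨ, dif_neg hp]
  -- cardinality computation
  have hcard := Fintype.card_le_of_surjective Ψ hsurj
  have hND : Fintype.card {s : Sym2 (Fin n) // ¬ s.IsDiag} = n.choose 2 := by
    rw [Sym2.card_subtype_not_diag, Fintype.card_fin]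
  have hdom : Fintype.card ({s : Sym2 (Fin n) // ¬ s.IsDiag} → Prop) = 2 ^ n.choose 2 := by
    rw [Fintype.card_fun, Fintype.card_prop, hND]
  -- card of inside pairs, for each embedding f
  have hin : ∀ f : V ↪ Fin n,
      Fintype.card {p : {s : Sym2 (Fin n) // ¬ s.IsDiag} // ∀ x ∈ p.1, x ∈ Set.range f}
        = k.choose 2 := by
    intro f
    have hbij : Function.Bijective (fun s : {s : Sym2 V // ¬ s.IsDiag} =>
        (⟨⟨s.1.map f, by rw [Sym2.isDiag_map f.injective]; exact s.2⟩, by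
          intro x hx
          rcases Sym2.mem_map.mp hx with ⟨a, -, rfl⟩
          exact ⟨a, rfl⟩⟩ :
          {p : {s : Sym2 (Fin n) // ¬ s.IsDiag} // ∀ x ∈ p.1, x ∈ Set.range f})) := by
      constructor
      · intro s t hst
        apply Subtype.ext
        apply Sym2.map.injective f.injective
        exact congrArg (fun q => q.1.1) hst
      · rintro ⟨⟨s, hnd⟩, hins⟩
        induction s using Sym2.ind with
        | _ a b =>
          obtain ⟨u, hu⟩ := hins a (by simp)
          obtain ⟨v, hv⟩ := hins b (by simp)
          have huv : u ≠ v := by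
            rintro rfl
            exact hnd (by rw [← hu, ← hv]; simp)
          refine ⟨⟨s(u, v), by simp [huv]⟩, ?_⟩
          apply Subtype.ext
          apply Subtype.ext
          show Sym2.map f s(u, v) = s(a, b)
          rw [Sym2.map_pair_eq, hu, hv]
    have := Fintype.card_congr (Equiv.ofBijective _ hbij)
    rw [← this, Sym2.card_subtype_not_diag, hk]
  have hout : ∀ f : V ↪ Fin n,
      Fintype.card {p : {s : Sym2 (Fin n) // ¬ s.IsDiag} // ¬ ∀ x ∈ p.1, x ∈ Set.range f}
        = n.choose 2 - k.choose 2 := by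
    intro f
    rw [Fintype.card_subtype_compl, hND, hin f]
  have hcod : Fintype.card (Σ f : V ↪ Fin n, ({p : {s : Sym2 (Fin n) // ¬ s.IsDiag} //
        ¬ ∀ x ∈ p.1, x ∈ Set.range f} → Prop))
      = (n.choose k * k.factorial) * 2 ^ (n.choose 2 - k.choose 2) := by
    rw [Fintype.card_sigma]
    have : ∀ f : V ↪ Fin n, Fintype.card ({p : {s : Sym2 (Fin n) // ¬ s.IsDiag} //
        ¬ ∀ x ∈ p.1, x ∈ Set.range f} → Prop) = 2 ^ (n.choose 2 - k.choose 2) := by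
      intro f
      rw [Fintype.card_fun, Fintype.card_prop, hout f]
    simp only [this]
    rw [Finset.sum_const, smul_eq_mul, Finset.card_univ, Fintype.card_embedding_eq,
      Fintype.card_fin, hk, Nat.descFactorial_eq_factorial_mul_choose]
    ring
  rw [hdom, hcod] at hcard
  have hle2 : k.choose 2 ≤ n.choose 2 := Nat.choose_le_choose 2 hkn
  have : (2 : ℕ) ^ n.choose 2 < 2 ^ n.choose 2 := by
    calc (2 : ℕ) ^ n.choose 2
        ≤ (n.choose k * k.factorial) * 2 ^ (n.choose 2 - k.choose 2) := hcard
      _ < 2 ^ k.choose 2 * 2 ^ (n.choose 2 - k.choose 2) := by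
          exact mul_lt_mul_of_pos_right hlt (by positivity)
      _ = 2 ^ n.choose 2 := by rw [← pow_add, Nat.add_sub_cancel' hle2]
  exact absurd this (lt_irrefl _)
end

section
/- For every real constant c > 0 there exists an integer L such that for every l ≥ L and every integer N with 2 ≤ N ≤ n_l^c, where n_l is the number of vertices of the Sierpinski graph S_l, the following holds: N times the number of labelled graphs G on N vertices for which some 2-coloring of the edges of G contains an induced monochromatic copy of S_l is at most 2^{C(N,2)}; equivalently, at least a (1 − 1/N) fraction of all labelled graphs on N vertices admit no 2-edge-coloring containing an induced monochromatic copy of S_l. -/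
/-!
The Sierpinski graph `S_l` (`l ≥ 1`) is defined recursively: `S_1` is a triangle; for
`l > 1`, `S_l` consists of three copies of `S_{l-1}` glued at corners.  We realize this
concretely in the integer grid: the level-`l` graph has corners `(0,0)`, `(2^(l-1),0)`,
`(0,2^(l-1))`, and is the union of three translated copies of the level-`(l-1)` graph;
the gluing identifications happen automatically because the shared corner points coincide.
-/

/-- `sierpAdj j` is the adjacency relation of the Sierpinski graph of level `j + 1`,
drawn in the integer grid with corners `(0,0)`, `(2^j, 0)`, `(0, 2^j)`. -/
def sierpAdj : ℕ → (ℤ × ℤ) → (ℤ × ℤ) → Prop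
  | 0 => fun p q =>
      p ≠ q ∧ p ∈ ({(0, 0), (1, 0), (0, 1)} : Set (ℤ × ℤ)) ∧
        q ∈ ({(0, 0), (1, 0), (0, 1)} : Set (ℤ × ℤ))
  | (j + 1) => fun p q =>
      sierpAdj j p q ∨ sierpAdj j (p - (2 ^ j, 0)) (q - (2 ^ j, 0)) ∨
        sierpAdj j (p - (0, 2 ^ j)) (q - (0, 2 ^ j))

/-- The Sierpinski graph `S_l` (meaningful for `l ≥ 1`), as a simple graph on `ℤ × ℤ`;
its vertex set is its support (the set of non-isolated points). -/
def Sierpinski (l : ℕ) : SimpleGraph (ℤ × ℤ) := SimpleGraph.fromRel (sierpAdj (l - 1))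

/-- The three corner vertices of `S_l`. -/
def sierpCorners (l : ℕ) : Set (ℤ × ℤ) := {(0, 0), (2 ^ (l - 1), 0), (0, 2 ^ (l - 1))}


/-- The Sierpinski graph `S_l` as a graph on its own (finite) vertex set, namely the
subgraph of `Sierpinski l` induced on its support. -/
def SierpinskiInduced (l : ℕ) : SimpleGraph ((Sierpinski l).support) :=
  (Sierpinski l).induce (Sierpinski l).support

/-- A 2-coloring `c` of the edges of `G` contains an induced monochromatic copy of `H`
if there is a graph embedding `f : H ↪g G` and a color `b` such that every edge
`f u f v` with `u v` an edge of `H` receives color `b`. -/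
def ColoringContainsInducedMonoCopy {V W : Type*} (H : SimpleGraph V)
    (G : SimpleGraph W) (c : Sym2 W → Bool) : Prop :=
  ∃ (f : H ↪g G) (b : Bool), ∀ u v : V, H.Adj u v → c s(f u, f v) = b

lemma sierpAdj_bounds : ∀ (j : ℕ) (p q : ℤ × ℤ), sierpAdj j p q →
    (0 ≤ p.1 ∧ 0 ≤ p.2 ∧ p.1 + p.2 ≤ 2 ^ j) ∧ (0 ≤ q.1 ∧ 0 ≤ q.2 ∧ q.1 + q.2 ≤ 2 ^ j) := by
  intro j
  induction j with
  | zero =>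
    rintro p q ⟨-, hp, hq⟩
    constructor <;>
      [rcases hp with h | h | h; rcases hq with h | h | h] <;> subst h <;> norm_num
  | succ j ih =>
    have hpow : (2:ℤ) ^ (j + 1) = 2 ^ j + 2 ^ j := by ring
    have h2 : (0:ℤ) < 2 ^ j := by positivity
    rintro p q (h | h | h) <;>
    · obtain ⟨⟨h1, h2', h3⟩, ⟨h4, h5, h6⟩⟩ := ih _ _ h
      simp -failIfUnchanged only [Prod.fst_sub, Prod.snd_sub] at *
      refine ⟨⟨?_, ?_, ?_⟩, ⟨?_, ?_, ?_⟩⟩ <;> omega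

lemma sierpinski_support_finite (l : ℕ) : (Sierpinski l).support.Finite := by
  apply Set.Finite.subset
    (Set.finite_Icc ((0 : ℤ), (0 : ℤ)) ((2 ^ (l - 1) : ℤ), (2 ^ (l - 1) : ℤ)))
  rintro p ⟨q, hadj⟩
  change (Sierpinski l).Adj p q at hadj
  rw [Sierpinski, SimpleGraph.fromRel_adj] at hadj
  obtain ⟨-, h | h⟩ := hadj <;>
  · have := sierpAdj_bounds _ _ _ h
    constructor <;> constructor <;> simp <;> omega

lemma sierpAdj_row : ∀ (j : ℕ) (i : ℤ), 0 ≤ i → i < 2 ^ j → sierpAdj j (i, 0) (i + 1, 0) := by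
  intro j
  induction j with
  | zero =>
    intro i h0 h1
    have : i = 0 := by omega
    subst this
    exact ⟨by norm_num [Prod.ext_iff], by simp, by simp⟩
  | succ j ih =>
    intro i h0 h1
    rcases lt_or_ge i (2 ^ j) with h | h
    · exact Or.inl (ih i h0 h)
    · refine Or.inr (Or.inl ?_)
      have e1 : ((i, 0) : ℤ × ℤ) - (2 ^ j, 0) = (i - 2 ^ j, 0) := by simp [Prod.ext_iff]
      have e2 : ((i + 1, 0) : ℤ × ℤ) - (2 ^ j, 0) = (i - 2 ^ j + 1, 0) := by
        simp [Prod.ext_iff]; ring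
      rw [e1, e2]
      have hpow : (2:ℤ) ^ (j + 1) = 2 ^ j + 2 ^ j := by ring
      have : i - 2 ^ j + 1 = (i - 2 ^ j) + 1 := by ring
      exact this ▸ ih (i - 2 ^ j) (by omega) (by omega)

lemma card_support_lb (l : ℕ) : 2 ^ (l - 1) + 1 ≤ (Sierpinski l).support.ncard := by
  classical
  set j := l - 1
  have h2 : (0:ℤ) < 2 ^ j := by positivity
  have hsub : ↑((Finset.Icc (0:ℤ) (2 ^ j)).image (fun i => ((i, 0) : ℤ × ℤ)))
      ⊆ (Sierpinski l).support := by
    intro p hp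
    simp only [Finset.coe_image, Set.mem_image, Finset.mem_coe, Finset.mem_Icc] at hp
    obtain ⟨i, ⟨h0, h1⟩, rfl⟩ := hp
    rcases lt_or_ge i (2 ^ j) with h | h
    · exact ⟨(i + 1, 0), ⟨by simp [Prod.ext_iff], Or.inl (sierpAdj_row j i h0 h)⟩⟩
    · refine ⟨(i - 1, 0), ⟨by simp [Prod.ext_iff]; omega, Or.inr ?_⟩⟩
      have := sierpAdj_row j (i - 1) (by omega) (by omega)
      rwa [show i - 1 + 1 = i by ring] at this
  calc (2 ^ j + 1 : ℕ)
      = ((Finset.Icc (0:ℤ) (2 ^ j)).image (fun i => ((i, 0) : ℤ × ℤ))).card := by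
        rw [Finset.card_image_of_injective _ (fun a b hab => by
          simpa [Prod.ext_iff] using hab)]
        rw [Int.card_Icc]
        rw [show ((2:ℤ) ^ j + 1 - 0) = ((2 ^ j + 1 : ℕ) : ℤ) by push_cast; ring,
          Int.toNat_natCast]
    _ = (↑((Finset.Icc (0:ℤ) (2 ^ j)).image (fun i => ((i, 0) : ℤ × ℤ))) : Set (ℤ × ℤ)).ncard := by
        rw [Set.ncard_coe_finset]
    _ ≤ (Sierpinski l).support.ncard :=
        Set.ncard_le_ncard hsub (sierpinski_support_finite l)

lemma count_induced_copies_le {V : Type*} [Fintype V] (H : SimpleGraph V) (N : ℕ) :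
    {G : SimpleGraph (Fin N) | Nonempty (H ↪g G)}.ncard ≤
      N ^ (Fintype.card V) * 2 ^ (N.choose 2 - (Fintype.card V).choose 2) := by
  classical
  set n := Fintype.card V with hn
  set A : (V ↪ Fin N) → Set (SimpleGraph (Fin N)) :=
    fun f => {G | ∀ u v : V, G.Adj (f u) (f v) ↔ H.Adj u v} with hA
  -- the per-f cardinality bound
  have hAcard : ∀ f : V ↪ Fin N, (A f).toFinset.card ≤ 2 ^ (N.choose 2 - n.choose 2) := by
    intro f
    set Q : Sym2 (Fin N) → Prop := fun s => ∀ a ∈ s, a ∈ Set.range f with hQ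
    set P : Sym2 (Fin N) → Prop := fun s => ¬ s.IsDiag with hP
    have hPiff : ∀ s, P s ↔ ¬ s.IsDiag := fun s => Iff.rfl
    -- injection into functions on "free" pairs
    set φ : (A f) → ({s : Sym2 (Fin N) // P s ∧ ¬ Q s} → Prop) :=
      fun G d => d.1 ∈ G.1.edgeSet with hφ
    have hinj : Function.Injective φ := by
      intro G G' h
      apply Subtype.ext
      ext a b
      by_cases hab : a = b
      · subst hab; simp
      by_cases hr : a ∈ Set.range f ∧ b ∈ Set.range f
      · obtain ⟨⟨u, rfl⟩, ⟨v, rfl⟩⟩ := hr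
        rw [G.2 u v, ← G'.2 u v]
      · have hd : P s(a, b) := by simp [hP, hab]
        have hq : ¬ Q s(a, b) := by
          intro hall
          exact hr ⟨hall a (by simp), hall b (by simp)⟩
        have := congrFun h ⟨s(a, b), hd, hq⟩
        simpa [hφ, SimpleGraph.mem_edgeSet] using iff_of_eq this
    have hcard1 : Fintype.card {s : Sym2 (Fin N) // P s} = N.choose 2 := by
      rw [Fintype.card_congr (Equiv.subtypeEquivRight hPiff), Sym2.card_subtype_not_diag,
        Fintype.card_fin]
    have hcard2 : Fintype.card {s : Sym2 (Fin N) // P s ∧ Q s} = n.choose 2 := by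
      have hbij : Function.Bijective
          (fun t : {t : Sym2 V // ¬ t.IsDiag} =>
            (⟨Sym2.map f t.1, by
              obtain ⟨t, hd⟩ := t
              revert hd
              induction t using Sym2.ind with
              | _ u v =>
                intro hd
                rw [Sym2.map_pair_eq]
                refine ⟨by simpa [hP, Sym2.mk_isDiag_iff] using
                    fun h => hd (Sym2.mk_isDiag_iff.mpr (f.injective h)), ?_⟩
                intro a ha
                rw [Sym2.mem_iff] at ha
                rcases ha with rfl | rfl
                exacts [⟨u, rfl⟩, ⟨v, rfl⟩]⟩ :
              {s : Sym2 (Fin N) // P s ∧ Q s})) := by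
        constructor
        · intro t t' h
          exact Subtype.ext (Sym2.map.injective f.injective (congrArg Subtype.val h))
        · rintro ⟨s, hd, hq⟩
          revert hd hq
          induction s using Sym2.ind with
          | _ a b =>
            intro hd hq
            obtain ⟨u, rfl⟩ := hq a (by simp)
            obtain ⟨v, rfl⟩ := hq b (by simp)
            refine ⟨⟨s(u, v), fun h => hd ?_⟩, Subtype.ext ?_⟩
            · rw [Sym2.mk_isDiag_iff] at h ⊢
              exact congrArg f h
            · exact Sym2.map_pair_eq f u v
      have := Fintype.card_of_bijective hbij
      rw [← this]
      rw [Sym2.card_subtype_not_diag]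
    have htarget : Fintype.card ({s : Sym2 (Fin N) // P s ∧ ¬ Q s} → Prop) =
        2 ^ (N.choose 2 - n.choose 2) := by
      rw [Fintype.card_fun, Fintype.card_prop]
      congr 1
      have hsplit := Finset.card_filter_add_card_filter_not
        (s := Finset.univ.filter P) (p := Q)
      rw [Finset.filter_filter, Finset.filter_filter] at hsplit
      have e1 : Fintype.card {s : Sym2 (Fin N) // P s} = (Finset.univ.filter P).card :=
        Fintype.card_subtype _
      have e2 : Fintype.card {s : Sym2 (Fin N) // P s ∧ Q s} =
          (Finset.univ.filter (fun s => P s ∧ Q s)).card := Fintype.card_subtype _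
      have e3 : Fintype.card {s : Sym2 (Fin N) // P s ∧ ¬ Q s} =
          (Finset.univ.filter (fun s => P s ∧ ¬ Q s)).card := Fintype.card_subtype _
      omega
    calc (A f).toFinset.card = Fintype.card (A f) := Set.toFinset_card _
      _ ≤ Fintype.card ({s : Sym2 (Fin N) // P s ∧ ¬ Q s} → Prop) :=
          Fintype.card_le_of_injective φ hinj
      _ = 2 ^ (N.choose 2 - n.choose 2) := htarget
  -- union bound
  have hsub : {G : SimpleGraph (Fin N) | Nonempty (H ↪g G)}.toFinset ⊆
      Finset.univ.biUnion (fun f : V ↪ Fin N => (A f).toFinset) := by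
    intro G hG
    rw [Set.mem_toFinset] at hG
    obtain ⟨e⟩ := hG
    rw [Finset.mem_biUnion]
    exact ⟨e.toEmbedding, Finset.mem_univ _, by
      rw [Set.mem_toFinset]
      exact fun u v => e.map_adj_iff⟩
  calc {G : SimpleGraph (Fin N) | Nonempty (H ↪g G)}.ncard
      = {G : SimpleGraph (Fin N) | Nonempty (H ↪g G)}.toFinset.card :=
        Set.ncard_eq_toFinset_card' _
    _ ≤ (Finset.univ.biUnion (fun f : V ↪ Fin N => (A f).toFinset)).card :=
        Finset.card_le_card hsub
    _ ≤ ∑ f : V ↪ Fin N, (A f).toFinset.card := Finset.card_biUnion_le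
    _ ≤ (Finset.univ : Finset (V ↪ Fin N)).card • 2 ^ (N.choose 2 - n.choose 2) :=
        Finset.sum_le_card_nsmul _ _ _ (fun f _ => hAcard f)
    _ = Fintype.card (V ↪ Fin N) * 2 ^ (N.choose 2 - n.choose 2) := by
        rw [smul_eq_mul, Finset.card_univ]
    _ ≤ N ^ n * 2 ^ (N.choose 2 - n.choose 2) := by
        apply Nat.mul_le_mul_right
        rw [Fintype.card_embedding_eq, Fintype.card_fin]
        exact Nat.descFactorial_le_pow _ _

open Real in
lemma pow_succ_le_two_pow_choose (c : ℝ) (hc : 0 < c) (n N : ℕ) (hn2 : 2 ≤ n)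
    (hnc : (32 * c) ^ 2 ≤ (n : ℝ)) (hN1 : 1 ≤ N) (hNle : (N : ℝ) ≤ (n : ℝ) ^ c) :
    N ^ (n + 1) ≤ 2 ^ n.choose 2 := by
  have key : ((N : ℝ)) ^ (n + 1) ≤ (2 : ℝ) ^ n.choose 2 := by
    set x : ℝ := (n : ℝ) with hx
    have hx2 : (2 : ℝ) ≤ x := by rw [hx]; exact_mod_cast hn2
    have hNpos : (0 : ℝ) < N := by exact_mod_cast Nat.lt_of_lt_of_le Nat.zero_lt_one hN1
    have hN1' : (1 : ℝ) ≤ N := by exact_mod_cast hN1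
    set s : ℝ := Real.sqrt x with hs
    have hsq : s * s = x := Real.mul_self_sqrt (by linarith)
    have hs0 : 0 < s := Real.sqrt_pos.mpr (by linarith)
    have hlogN : Real.log N ≤ c * Real.log x := by
      calc Real.log N ≤ Real.log (x ^ c) :=
            (Real.log_le_log_iff hNpos (by positivity)).mpr hNle
        _ = c * Real.log x := Real.log_rpow (by linarith) c
    have hlogx0 : 0 ≤ Real.log x := Real.log_nonneg (by linarith)
    have hlogN0 : 0 ≤ Real.log N := Real.log_nonneg hN1'
    have hlogx : Real.log x ≤ 2 * s := by
      have h1 : Real.log x = 2 * Real.log s := by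
        rw [← hsq, Real.log_mul hs0.ne' hs0.ne']; ring
      have h2 : Real.log s ≤ s - 1 := Real.log_le_sub_one_of_pos hs0
      linarith
    have hsc : 32 * c ≤ s := Real.le_sqrt_of_sq_le hnc
    have hlog2 : (1 / 2 : ℝ) ≤ Real.log 2 := by linarith [Real.log_two_gt_d9]
    have hmain : ((n : ℝ) + 1) * Real.log N ≤ (n.choose 2 : ℝ) * Real.log 2 := by
      rw [Nat.cast_choose_two]
      have t1 : (x + 1) * Real.log N ≤ (x + 1) * (c * (2 * s)) := by
        apply mul_le_mul_of_nonneg_left _ (by linarith)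
        calc Real.log N ≤ c * Real.log x := hlogN
          _ ≤ c * (2 * s) := mul_le_mul_of_nonneg_left hlogx hc.le
      have t2 : (x + 1) * (c * (2 * s)) ≤ (2 * x) * (c * (2 * s)) :=
        mul_le_mul_of_nonneg_right (by linarith) (by positivity)
      have t4 : (2 * x) * (c * (2 * s)) ≤ (2 * x) * ((s / 32) * (2 * s)) := by
        apply mul_le_mul_of_nonneg_left _ (by linarith)
        apply mul_le_mul_of_nonneg_right (by linarith) (by positivity)
      have t5 : (2 * x) * ((s / 32) * (2 * s)) = x * x / 8 := by
        have : (2 * x) * ((s / 32) * (2 * s)) = x * (s * s) / 8 := by ring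
        rw [this, hsq]
      have t6 : x * x / 8 ≤ x * (x - 1) / 2 * Real.log 2 := by
        nlinarith [mul_nonneg (show (0:ℝ) ≤ x * (x - 1) / 2 by nlinarith)
          (show (0:ℝ) ≤ Real.log 2 - 1 / 2 by linarith)]
      linarith
    have hfin : Real.log ((N : ℝ) ^ (n + 1)) ≤ Real.log ((2 : ℝ) ^ n.choose 2) := by
      rw [Real.log_pow, Real.log_pow]
      push_cast
      exact hmain
    exact (Real.log_le_log_iff (by positivity) (by positivity)).mp hfin
  exact_mod_cast key


/-- For every real constant `c > 0` there is an integer `L` such that for every `l ≥ L`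
and every integer `N` with `2 ≤ N ≤ n_l ^ c`, where `n_l` is the number of vertices of
`S_l`: `N` times the number of labelled graphs `G` on `N` vertices for which some
2-coloring of the edges contains an induced monochromatic copy of `S_l` is at most
`2^(C(N,2))` — equivalently, at least a `(1 − 1/N)` fraction of all `2^(C(N,2))`
labelled graphs on `N` vertices admit no 2-edge-coloring containing an induced
monochromatic copy of `S_l`. -/
theorem almost_all_graphs_without_mono_sierpinski (c : ℝ) (hc : 0 < c) :
    ∃ L : ℕ, 1 ≤ L ∧ ∀ l : ℕ, L ≤ l → ∀ N : ℕ, 2 ≤ N →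
      (N : ℝ) ≤ ((Sierpinski l).support.ncard : ℝ) ^ c →
      N * {G : SimpleGraph (Fin N) | ∃ coloring : Sym2 (Fin N) → Bool,
            ColoringContainsInducedMonoCopy (SierpinskiInduced l) G coloring}.ncard ≤
        2 ^ N.choose 2 := by
  classical
  refine ⟨max 2 ⌈(32 * c) ^ 2⌉₊, le_trans one_le_two (le_max_left _ _), ?_⟩
  intro l hl N hN2 hNle
  haveI : Fintype ((Sierpinski l).support : Set (ℤ × ℤ)) :=
    (sierpinski_support_finite l).fintype
  set n := (Sierpinski l).support.ncard with hn
  have hcardV : Fintype.card ((Sierpinski l).support : Set (ℤ × ℤ)) = n := by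
    rw [hn, Set.ncard_eq_toFinset_card', Set.toFinset_card]
  have hl2 : 2 ≤ l := le_trans (le_max_left _ _) hl
  have hlb := card_support_lb l
  have hpow : l - 1 < 2 ^ (l - 1) := Nat.lt_two_pow_self
  have hln : l + 1 ≤ n := by omega
  have hn2 : 2 ≤ n := by omega
  have hnc : (32 * c) ^ 2 ≤ (n : ℝ) := by
    have h1 : (⌈(32 * c) ^ 2⌉₊ : ℕ) ≤ l := le_trans (le_max_right _ _) hl
    calc (32 * c) ^ 2 ≤ (⌈(32 * c) ^ 2⌉₊ : ℝ) := Nat.le_ceil _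
      _ ≤ (n : ℝ) := by exact_mod_cast le_trans h1 (by omega)
  set S := {G : SimpleGraph (Fin N) | ∃ coloring : Sym2 (Fin N) → Bool,
      ColoringContainsInducedMonoCopy (SierpinskiInduced l) G coloring} with hS
  have hsub : S ⊆ {G : SimpleGraph (Fin N) | Nonempty (SierpinskiInduced l ↪g G)} := by
    rintro G ⟨coloring, f, b, -⟩
    exact ⟨f⟩
  have hcount := count_induced_copies_le (SierpinskiInduced l) N
  rw [hcardV] at hcount
  have hSle : S.ncard ≤ N ^ n * 2 ^ (N.choose 2 - n.choose 2) :=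
    le_trans (Set.ncard_le_ncard hsub (Set.toFinite _)) hcount
  rcases eq_or_ne S.ncard 0 with h0 | h0
  · rw [h0, Nat.mul_zero]
    exact Nat.zero_le _
  obtain ⟨G, coloring, f, b, -⟩ := Set.nonempty_of_ncard_ne_zero h0
  have hnN : n ≤ N := by
    have := Fintype.card_le_of_embedding f.toEmbedding
    rwa [hcardV, Fintype.card_fin] at this
  have hkey : N ^ (n + 1) ≤ 2 ^ n.choose 2 :=
    pow_succ_le_two_pow_choose c hc n N hn2 hnc (by omega) hNle
  calc N * S.ncard ≤ N * (N ^ n * 2 ^ (N.choose 2 - n.choose 2)) :=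
        Nat.mul_le_mul_left _ hSle
    _ = N ^ (n + 1) * 2 ^ (N.choose 2 - n.choose 2) := by ring
    _ ≤ 2 ^ n.choose 2 * 2 ^ (N.choose 2 - n.choose 2) := Nat.mul_le_mul_right _ hkey
    _ = 2 ^ N.choose 2 := by
        rw [← pow_add]
        congr 1
        have := Nat.choose_le_choose 2 hnN
        omega
end
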